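/- Suppose the Geronimus relations hold: a_{n+1}² = (1-α_{2n-1})(1-α_{2n}²)(1+α_{2n+1}) and b_{n+1} = (1-α_{2n-1})α_{2n} - (1+α_{2n-1})α_{2n-2} for all n ≥ 0, with α_n ∈ (-1,1) for n ≥ 0, α_{-1} = -1, and α, and hence b and a²-1, summable appropriately so that λ_n := -∑_{k>n} b_k and κ_n := -∑_{k>n}(a_k²-1) converge. Then κ_n = α_{2n-1} + K(α)_n and λ_n = α_{2n-2} + L(α)_n, where K(α)_n = ∑_{k=n}^∞ [α_{2k}² + α_{2k-1}α_{2k+1} - α_{2k}²(α_{2k-1} - α_{2k+1}) - α_{2k}²α_{2k-1}α_{2k+1}] and L(α)_n = ∑_{k=n}^∞ α_{2k-1}(α_{2k} + α_{2k-2}). -/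

import Mathlib

open scoped BigOperators
open Filter

/-- The summand of `K(α)` at index `k`. -/
def Kterm (α : ℤ → ℝ) (k : ℕ) : ℝ :=
  α (2 * (k : ℤ)) ^ 2 + α (2 * (k : ℤ) - 1) * α (2 * (k : ℤ) + 1)
    - α (2 * (k : ℤ)) ^ 2 * (α (2 * (k : ℤ) - 1) - α (2 * (k : ℤ) + 1))
    - α (2 * (k : ℤ)) ^ 2 * α (2 * (k : ℤ) - 1) * α (2 * (k : ℤ) + 1)

/-- The summand of `L(α)` at index `k`. -/
def Lterm (α : ℤ → ℝ) (k : ℕ) : ℝ :=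
  α (2 * (k : ℤ) - 1) * (α (2 * (k : ℤ)) + α (2 * (k : ℤ) - 2))

/-- Under the Geronimus relations (with `α_n ∈ (-1,1)` for `n ≥ 0`, `α₋₁ = -1`,
`α_n = 0` for `n < -1`, `α_n → 0`, `a_n > 0`, and the tail sums
`λ_n = -∑_{k>n} b_k`, `κ_n = -∑_{k>n}(a_k² - 1)` convergent), one has
`κ_n = α_{2n-1} + K(α)_n` and `λ_n = α_{2n-2} + L(α)_n`, where the series `K(α)_n`
and `L(α)_n` converge. -/
theorem expanded_lambda_kappa (α : ℤ → ℝ) (a b lam kap : ℕ → ℝ)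
    (hIoo : ∀ n : ℤ, 0 ≤ n → α n ∈ Set.Ioo (-1 : ℝ) 1)
    (hm1 : α (-1) = -1) (hneg : ∀ n : ℤ, n < -1 → α n = 0)
    (hα0 : Tendsto (fun n : ℕ => α (n : ℤ)) atTop (nhds 0))
    (hapos : ∀ n : ℕ, 0 < a n)
    (ha : ∀ n : ℕ, a (n + 1) ^ 2 =
      (1 - α (2 * (n : ℤ) - 1)) * (1 - α (2 * (n : ℤ)) ^ 2) * (1 + α (2 * (n : ℤ) + 1)))
    (hb : ∀ n : ℕ, b (n + 1) =
      (1 - α (2 * (n : ℤ) - 1)) * α (2 * (n : ℤ)) -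
        (1 + α (2 * (n : ℤ) - 1)) * α (2 * (n : ℤ) - 2))
    (hlam : ∀ n : ℕ, Tendsto (fun N : ℕ => ∑ k ∈ Finset.Ioc n N, b k)
      atTop (nhds (-(lam n))))
    (hkap : ∀ n : ℕ, Tendsto (fun N : ℕ => ∑ k ∈ Finset.Ioc n N, (a k ^ 2 - 1))
      atTop (nhds (-(kap n)))) :
    ∀ n : ℕ,
      Tendsto (fun N : ℕ => ∑ k ∈ Finset.Ico n N, Kterm α k)
        atTop (nhds (kap n - α (2 * (n : ℤ) - 1))) ∧
      Tendsto (fun N : ℕ => ∑ k ∈ Finset.Ico n N, Lterm α k)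
        atTop (nhds (lam n - α (2 * (n : ℤ) - 2))) := by
  intro n
  -- pointwise identities
  have hK1 : ∀ k : ℕ, Kterm α k = (α (2 * (k : ℤ) + 1) - α (2 * (k : ℤ) - 1))
      - (a (k + 1) ^ 2 - 1) := by
    intro k
    rw [ha k]; unfold Kterm; ring
  have hL1 : ∀ k : ℕ, Lterm α k = (α (2 * (k : ℤ)) - α (2 * (k : ℤ) - 2)) - b (k + 1) := by
    intro k
    rw [hb k]; unfold Lterm; ring
  -- telescoping identities for N ≥ n
  have hKtel : ∀ N : ℕ, n ≤ N → ∑ k ∈ Finset.Ico n N, Kterm α k =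
      α (2 * (N : ℤ) - 1) - α (2 * (n : ℤ) - 1)
        - ∑ k ∈ Finset.Ioc n N, (a k ^ 2 - 1) := by
    intro N hN
    induction N, hN using Nat.le_induction with
    | base => simp
    | succ N hN ih =>
      rw [Finset.sum_Ico_succ_top hN, Finset.sum_Ioc_succ_top hN, ih, hK1 N]
      push_cast
      ring_nf
      try linarith [hK1 N, hL1 N]
  have hLtel : ∀ N : ℕ, n ≤ N → ∑ k ∈ Finset.Ico n N, Lterm α k =
      α (2 * (N : ℤ) - 2) - α (2 * (n : ℤ) - 2)
        - ∑ k ∈ Finset.Ioc n N, b k := by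
    intro N hN
    induction N, hN using Nat.le_induction with
    | base => simp
    | succ N hN ih =>
      rw [Finset.sum_Ico_succ_top hN, Finset.sum_Ioc_succ_top hN, ih, hL1 N]
      push_cast
      ring_nf
      try linarith [hK1 N, hL1 N]
  -- boundary terms tend to 0
  have hsub : ∀ c : ℕ, Tendsto (fun N : ℕ => α (2 * (N : ℤ) - (c : ℤ))) atTop (nhds 0) := by
    intro c
    have h1 : Tendsto (fun N : ℕ => 2 * N - c) atTop atTop := by
      apply tendsto_atTop_atTop.mpr
      intro m
      exact ⟨m + c, fun N hN => by omega⟩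
    have h2 := hα0.comp h1
    apply h2.congr'
    filter_upwards [eventually_ge_atTop c] with N hN
    simp only [Function.comp]
    congr 1
    push_cast [Nat.cast_sub (by omega : c ≤ 2 * N)]
    ring
  constructor
  · have h := ((hsub 1).sub_const (α (2 * (n : ℤ) - 1))).sub (hkap n)
    rw [show (0 : ℝ) - α (2 * (n : ℤ) - 1) - (-(kap n)) = kap n - α (2 * (n : ℤ) - 1) by ring]
      at h
    apply h.congr'
    filter_upwards [eventually_ge_atTop n] with N hN
    exact (hKtel N hN).symm
  · have h := ((hsub 2).sub_const (α (2 * (n : ℤ) - 2))).sub (hlam n)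
    rw [show (0 : ℝ) - α (2 * (n : ℤ) - 2) - (-(lam n)) = lam n - α (2 * (n : ℤ) - 2) by ring]
      at h
    apply h.congr'
    filter_upwards [eventually_ge_atTop n] with N hN
    exact (hLtel N hN).symm
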